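/- If N labeled robots occupy distinct vertices of a square grid with mesh size 2√2 and each robot is a unit disk (radius 1) centered at its vertex, then any two robots simultaneously traversing distinct grid edges at speed at most 1 (each moving from one endpoint of its edge toward the other, both starting at integer multiples of the edge-traversal time) never overlap: the distance between their centers is at least 2 at all times. -/

import Mathlib

/-- The vertex of the square grid of mesh size 2√2 with integer coordinates z. -/
noncomputable def gridPt (z : ℤ × ℤ) : EuclideanSpace ℝ (Fin 2) :=
  (WithLp.equiv 2 (Fin 2 → ℝ)).symm
    ![2 * Real.sqrt 2 * (z.1 : ℝ), 2 * Real.sqrt 2 * (z.2 : ℝ)]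

/-- Two grid cells are orthogonally adjacent. -/
def IntAdj (a b : ℤ × ℤ) : Prop := |a.1 - b.1| + |a.2 - b.2| = 1

private lemma sq_ge_one {x y : ℤ} (h : ¬(x = 0 ∧ y = 0)) : 1 ≤ x ^ 2 + y ^ 2 := by
  rcases not_and_or.mp h with h | h
  · have h1 := Int.one_le_abs h
    nlinarith [sq_abs x, sq_nonneg y, abs_nonneg x]
  · have h1 := Int.one_le_abs h
    nlinarith [sq_abs y, sq_nonneg x, abs_nonneg y]

private lemma quad_min {A B C : ℝ} (hA : 0 ≤ A) (h0 : 1 ≤ C) (h1 : 1 ≤ A + B + C)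
    (hD : 0 ≤ B ∨ B + 2 * A ≤ 0 ∨ 2 * A ≤ 4 * A * C - B ^ 2)
    (s : ℝ) (hs0 : 0 ≤ s) (hs1 : s ≤ 1) :
    1 / 2 ≤ A * s ^ 2 + B * s + C := by
  rcases hD with h | h | h
  · nlinarith [mul_nonneg h hs0, mul_nonneg hA (mul_nonneg hs0 hs0)]
  · have key : 0 ≤ (1 - s) * (-(A * (s + 1) + B)) := by
      have h2 : A * (s + 1) + B ≤ 0 := by nlinarith [mul_nonneg hA (sub_nonneg.2 hs1)]
      have h3 : 0 ≤ 1 - s := by linarith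
      nlinarith
    nlinarith
  · rcases eq_or_lt_of_le hA with h' | h'
    · have hB : B = 0 := by nlinarith [sq_nonneg B]
      rw [hB, ← h']
      nlinarith
    · nlinarith [sq_nonneg (2 * A * s + B), mul_pos h' h']

private lemma unit_cases {x y : ℤ} (h : |x| + |y| = 1) :
    (x = 1 ∧ y = 0) ∨ (x = -1 ∧ y = 0) ∨ (x = 0 ∧ y = 1) ∨ (x = 0 ∧ y = -1) := by
  rcases abs_cases x with ⟨h1, _⟩ | ⟨h1, _⟩ <;> rcases abs_cases y with ⟨h2, _⟩ | ⟨h2, _⟩ <;> omega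

/-- The disjunction needed for the quadratic minimum, for A = 2 cases (w = u·v / 2... ). -/
private lemma caseA2 {w C : ℤ} (hC : 1 ≤ C) :
    0 ≤ 2 * w ∨ 2 * w + 2 * 2 ≤ 0 ∨ 2 * 2 ≤ 4 * 2 * C - (2 * w) ^ 2 := by
  rcases le_or_gt 0 w with h | h
  · left; omega
  · rcases le_or_gt w (-2) with h2 | h2
    · right; left; omega
    · have hw : w = -1 := by omega
      subst hw
      right; right; nlinarith

private lemma caseA4 {u1 u2 : ℤ} (hne : ¬(u1 = -1 ∧ u2 = 0)) :
    0 ≤ 2 * (u1 * 2) ∨ 2 * (u1 * 2) + 2 * 4 ≤ 0 ∨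
      2 * 4 ≤ 4 * 4 * (u1 ^ 2 + u2 ^ 2) - (2 * (u1 * 2)) ^ 2 := by
  rcases le_or_gt 0 u1 with h | h
  · left; omega
  · rcases le_or_gt u1 (-2) with h2 | h2
    · right; left; omega
    · have hu1 : u1 = -1 := by omega
      subst hu1
      have hu2 : u2 ≠ 0 := by tauto
      have h2 : 1 ≤ u2 ^ 2 := by nlinarith [Int.one_le_abs hu2, sq_abs u2, abs_nonneg u2]
      right; right; nlinarith


private lemma caseA2' (x y : ℤ) (hC : 1 ≤ x ^ 2 + y ^ 2) :
    0 ≤ x + y ∨ 2 * (x + y) + 4 ≤ 0 ∨ 4 ≤ 8 * (x ^ 2 + y ^ 2) - (2 * (x + y)) ^ 2 := by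
  rcases le_or_gt 0 (x + y) with h | h
  · left; omega
  · rcases le_or_gt (x + y) (-2) with h2 | h2
    · right; left; omega
    · have hw : x + y = -1 := by omega
      right; right; nlinarith [hw]

private lemma caseA4' (x y : ℤ) (hne : ¬(x = -1 ∧ y = 0)) :
    0 ≤ x ∨ 2 * (x * 2) + 8 ≤ 0 ∨ 8 ≤ 16 * (x ^ 2 + y ^ 2) - (2 * (x * 2)) ^ 2 := by
  rcases le_or_gt 0 x with h | h
  · left; omega
  · rcases le_or_gt x (-2) with h2 | h2
    · right; left; omega
    · have hx : x = -1 := by omega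
      subst hx
      have hy : y ≠ 0 := by tauto
      have h2 : 1 ≤ y ^ 2 := by nlinarith [Int.one_le_abs hy, sq_abs y, abs_nonneg y]
      right; right; nlinarith

private lemma int_key (u1 u2 p1 p2 q1 q2 : ℤ)
    (hp : |p1| + |p2| = 1) (hq : |q1| + |q2| = 1)
    (hu : ¬(u1 = 0 ∧ u2 = 0))
    (huv : ¬(u1 + p1 - q1 = 0 ∧ u2 + p2 - q2 = 0))
    (hswap : ¬(p1 = -u1 ∧ p2 = -u2 ∧ q1 = u1 ∧ q2 = u2)) :
    1 ≤ u1 ^ 2 + u2 ^ 2 ∧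
    1 ≤ ((p1 - q1) ^ 2 + (p2 - q2) ^ 2) + 2 * (u1 * (p1 - q1) + u2 * (p2 - q2))
        + (u1 ^ 2 + u2 ^ 2) ∧
    (0 ≤ 2 * (u1 * (p1 - q1) + u2 * (p2 - q2)) ∨
     2 * (u1 * (p1 - q1) + u2 * (p2 - q2)) + 2 * ((p1 - q1) ^ 2 + (p2 - q2) ^ 2) ≤ 0 ∨
     2 * ((p1 - q1) ^ 2 + (p2 - q2) ^ 2) ≤
       4 * ((p1 - q1) ^ 2 + (p2 - q2) ^ 2) * (u1 ^ 2 + u2 ^ 2)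
         - (2 * (u1 * (p1 - q1) + u2 * (p2 - q2))) ^ 2) := by
  have hC : 1 ≤ u1 ^ 2 + u2 ^ 2 := sq_ge_one hu
  refine ⟨hC, ?_, ?_⟩
  · have h2 := sq_ge_one huv
    nlinarith [h2]
  · rcases unit_cases hp with ⟨e1, e2⟩ | ⟨e1, e2⟩ | ⟨e1, e2⟩ | ⟨e1, e2⟩ <;>
      rcases unit_cases hq with ⟨f1, f2⟩ | ⟨f1, f2⟩ | ⟨f1, f2⟩ | ⟨f1, f2⟩ <;>
      subst e1 <;> subst e2 <;> subst f1 <;> subst f2 <;> norm_num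
    · rcases caseA4' u1 u2 (by omega) with h | h | h <;>
        first | omega | (right; right; nlinarith [h])
    · rcases caseA2' u1 (-u2) (by simpa using hC) with h | h | h <;>
        first | omega | (right; right; nlinarith [h])
    · rcases caseA2' u1 u2 (by simpa using hC) with h | h | h <;>
        first | omega | (right; right; nlinarith [h])
    · rcases caseA4' (-u1) u2 (by omega) with h | h | h <;>
        first | omega | (right; right; nlinarith [h])
    · rcases caseA2' (-u1) (-u2) (by simpa using hC) with h | h | h <;>
        first | omega | (right; right; nlinarith [h])
    · rcases caseA2' (-u1) u2 (by simpa using hC) with h | h | h <;>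
        first | omega | (right; right; nlinarith [h])
    · rcases caseA2' (-u1) u2 (by simpa using hC) with h | h | h <;>
        first | omega | (right; right; nlinarith [h])
    · rcases caseA2' u1 u2 (by simpa using hC) with h | h | h <;>
        first | omega | (right; right; nlinarith [h])
    · rcases caseA4' u2 u1 (by omega) with h | h | h <;>
        first | omega | (right; right; nlinarith [h])
    · rcases caseA2' (-u1) (-u2) (by simpa using hC) with h | h | h <;>
        first | omega | (right; right; nlinarith [h])
    · rcases caseA2' u1 (-u2) (by simpa using hC) with h | h | h <;>
        first | omega | (right; right; nlinarith [h])
    · rcases caseA4' (-u2) u1 (by omega) with h | h | h <;>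
        first | omega | (right; right; nlinarith [h])


set_option maxHeartbeats 1000000 in
/-- Two unit-disk robots simultaneously traversing distinct edges of the grid of mesh
size 2√2 at unit speed, as part of a valid transformation step (distinct starts,
distinct destinations, no swap along a shared edge), never overlap: the distance
between their centers is at least 2 at all times. -/
theorem stmt_18 (a c b d : ℤ × ℤ)
    (hac : IntAdj a c) (hbd : IntAdj b d)
    (hstart : a ≠ b) (hdest : c ≠ d) (hswap : ¬(c = b ∧ d = a)) :
    ∀ t ∈ Set.Icc (0:ℝ) (2 * Real.sqrt 2),
      2 ≤ dist (gridPt a + (t / (2 * Real.sqrt 2)) • (gridPt c - gridPt a))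
              (gridPt b + (t / (2 * Real.sqrt 2)) • (gridPt d - gridPt b)) := by
  intro t ht
  obtain ⟨ht0, ht1⟩ := ht
  have hr2 : (0:ℝ) < Real.sqrt 2 := Real.sqrt_pos.2 (by norm_num)
  have h2 : (0:ℝ) < 2 * Real.sqrt 2 := by linarith
  set s : ℝ := t / (2 * Real.sqrt 2) with hsdef
  have hs0 : 0 ≤ s := div_nonneg ht0 h2.le
  have hs1 : s ≤ 1 := (div_le_one h2).2 ht1
  -- integer data
  have hp : |c.1 - a.1| + |c.2 - a.2| = 1 := by
    have h := hac; unfold IntAdj at h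
    rw [abs_sub_comm (c.1), abs_sub_comm (c.2)]; exact h
  have hq : |d.1 - b.1| + |d.2 - b.2| = 1 := by
    have h := hbd; unfold IntAdj at h
    rw [abs_sub_comm (d.1), abs_sub_comm (d.2)]; exact h
  have hu : ¬(a.1 - b.1 = 0 ∧ a.2 - b.2 = 0) := by
    rintro ⟨e1, e2⟩
    exact hstart (Prod.ext_iff.2 ⟨by omega, by omega⟩)
  have huv : ¬(a.1 - b.1 + (c.1 - a.1) - (d.1 - b.1) = 0 ∧
      a.2 - b.2 + (c.2 - a.2) - (d.2 - b.2) = 0) := by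
    rintro ⟨e1, e2⟩
    exact hdest (Prod.ext_iff.2 ⟨by omega, by omega⟩)
  have hsw : ¬(c.1 - a.1 = -(a.1 - b.1) ∧ c.2 - a.2 = -(a.2 - b.2) ∧
      d.1 - b.1 = a.1 - b.1 ∧ d.2 - b.2 = a.2 - b.2) := by
    rintro ⟨e1, e2, e3, e4⟩
    exact hswap ⟨Prod.ext_iff.2 ⟨by omega, by omega⟩, Prod.ext_iff.2 ⟨by omega, by omega⟩⟩
  obtain ⟨kC, kE, kD⟩ := int_key (a.1 - b.1) (a.2 - b.2) (c.1 - a.1) (c.2 - a.2)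
    (d.1 - b.1) (d.2 - b.2) hp hq hu huv hsw
  -- real quadratic data
  set v1 : ℝ := ((c.1 : ℝ) - a.1) - ((d.1 : ℝ) - b.1) with hv1
  set v2 : ℝ := ((c.2 : ℝ) - a.2) - ((d.2 : ℝ) - b.2) with hv2
  set w1 : ℝ := (a.1 : ℝ) - b.1 with hw1
  set w2 : ℝ := (a.2 : ℝ) - b.2 with hw2
  set A : ℝ := v1 ^ 2 + v2 ^ 2 with hA
  set B : ℝ := 2 * (w1 * v1 + w2 * v2) with hB
  set C : ℝ := w1 ^ 2 + w2 ^ 2 with hC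
  have hAnn : 0 ≤ A := by positivity
  have h0 : 1 ≤ C := by
    have : ((1:ℤ):ℝ) ≤ (((a.1 - b.1) ^ 2 + (a.2 - b.2) ^ 2 : ℤ) : ℝ) := by exact_mod_cast kC
    rw [hC, hw1, hw2]; push_cast at this ⊢; linarith
  have h1 : 1 ≤ A + B + C := by
    have : ((1:ℤ):ℝ) ≤ ((((c.1 - a.1) - (d.1 - b.1)) ^ 2 + ((c.2 - a.2) - (d.2 - b.2)) ^ 2
        + 2 * ((a.1 - b.1) * ((c.1 - a.1) - (d.1 - b.1)) + (a.2 - b.2) * ((c.2 - a.2) - (d.2 - b.2)))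
        + ((a.1 - b.1) ^ 2 + (a.2 - b.2) ^ 2) : ℤ) : ℝ) := by exact_mod_cast kE
    rw [hA, hB, hC, hv1, hv2, hw1, hw2]; push_cast at this ⊢; linarith
  have hD : 0 ≤ B ∨ B + 2 * A ≤ 0 ∨ 2 * A ≤ 4 * A * C - B ^ 2 := by
    rcases kD with h | h | h
    · left
      have : ((0:ℤ):ℝ) ≤ ((2 * ((a.1 - b.1) * ((c.1 - a.1) - (d.1 - b.1))
          + (a.2 - b.2) * ((c.2 - a.2) - (d.2 - b.2))) : ℤ) : ℝ) := by exact_mod_cast h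
      rw [hB, hv1, hv2, hw1, hw2]; push_cast at this ⊢; linarith
    · right; left
      have : ((2 * ((a.1 - b.1) * ((c.1 - a.1) - (d.1 - b.1))
          + (a.2 - b.2) * ((c.2 - a.2) - (d.2 - b.2)))
          + 2 * (((c.1 - a.1) - (d.1 - b.1)) ^ 2 + ((c.2 - a.2) - (d.2 - b.2)) ^ 2) : ℤ) : ℝ)
          ≤ ((0:ℤ):ℝ) := by exact_mod_cast h
      rw [hA, hB, hv1, hv2, hw1, hw2]; push_cast at this ⊢; linarith
    · right; right
      have : ((2 * (((c.1 - a.1) - (d.1 - b.1)) ^ 2 + ((c.2 - a.2) - (d.2 - b.2)) ^ 2) : ℤ) : ℝ)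
          ≤ ((4 * (((c.1 - a.1) - (d.1 - b.1)) ^ 2 + ((c.2 - a.2) - (d.2 - b.2)) ^ 2)
              * ((a.1 - b.1) ^ 2 + (a.2 - b.2) ^ 2)
            - (2 * ((a.1 - b.1) * ((c.1 - a.1) - (d.1 - b.1))
              + (a.2 - b.2) * ((c.2 - a.2) - (d.2 - b.2)))) ^ 2 : ℤ) : ℝ) := by exact_mod_cast h
      rw [hA, hB, hC, hv1, hv2, hw1, hw2]; push_cast at this ⊢; linarith [this]
  have hmin : 1 / 2 ≤ A * s ^ 2 + B * s + C := quad_min hAnn h0 h1 hD s hs0 hs1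
  -- compute the distance
  have hsq : Real.sqrt 2 ^ 2 = 2 := Real.sq_sqrt (by norm_num)
  rw [EuclideanSpace.dist_eq]
  rw [show (2:ℝ) = Real.sqrt 4 by
    rw [show (4:ℝ) = 2 ^ 2 by norm_num, Real.sqrt_sq (by norm_num : (0:ℝ) ≤ 2)]]
  apply Real.sqrt_le_sqrt
  rw [Fin.sum_univ_two]
  simp only [gridPt, PiLp.add_apply, PiLp.smul_apply, PiLp.sub_apply,
    WithLp.equiv_symm_apply, WithLp.ofLp_toLp, Matrix.cons_val_zero, Matrix.cons_val_one, Matrix.head_cons,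
    smul_eq_mul, Real.dist_eq, sq_abs]
  have key : (2 * Real.sqrt 2 * (a.1:ℝ) + s * (2 * Real.sqrt 2 * (c.1:ℝ) - 2 * Real.sqrt 2 * (a.1:ℝ))
        - (2 * Real.sqrt 2 * (b.1:ℝ) + s * (2 * Real.sqrt 2 * (d.1:ℝ) - 2 * Real.sqrt 2 * (b.1:ℝ)))) ^ 2
      + (2 * Real.sqrt 2 * (a.2:ℝ) + s * (2 * Real.sqrt 2 * (c.2:ℝ) - 2 * Real.sqrt 2 * (a.2:ℝ))
        - (2 * Real.sqrt 2 * (b.2:ℝ) + s * (2 * Real.sqrt 2 * (d.2:ℝ) - 2 * Real.sqrt 2 * (b.2:ℝ)))) ^ 2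
      = 8 * (A * s ^ 2 + B * s + C) := by
    rw [hA, hB, hC, hv1, hv2, hw1, hw2]
    linear_combination (4 * (((a.1:ℝ) - b.1 + s * (((c.1:ℝ) - a.1) - ((d.1:ℝ) - b.1))) ^ 2
      + ((a.2:ℝ) - b.2 + s * (((c.2:ℝ) - a.2) - ((d.2:ℝ) - b.2))) ^ 2)) * hsq
  rw [key]
  clear_value s v1 v2 w1 w2 A B C
  linarith [hmin]
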